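/- arXiv:2404.12008 — 5 statements merged into one kernel-verified Lean document; each statement's English description precedes it below -/
import Mathlib

section
/- Let Y ∈ {0,1}^{n×m} be a binary matrix whose column-sum vector r = Yᵀe satisfies the power law r_g = r_max · g^(−α) for g = 1,…,m with r_max > 0 and α > 1. Let (σ1, p1, q1) be a principal singular triple of Y in which p1 and q1 are entrywise nonnegative. Then cos(r, q1) ≥ (σ1² / (r_max · √ζ(2α))) · √(1 − r_max(ζ(α) − 1)/σ1²). -/
open Matrix

/-- Riemann zeta function for real `s > 1`: `ζ(s) = ∑_{j=1}^∞ j^(−s)`. -/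
noncomputable def zetaR (s : ℝ) : ℝ := ∑' j : ℕ, ((j : ℝ) + 1) ^ (-s)

/-- Euclidean (L2) norm of a vector. -/
noncomputable def euclNorm {k : ℕ} (v : Fin k → ℝ) : ℝ := Real.sqrt (∑ i, v i ^ 2)

/-- Cosine similarity of two vectors. -/
noncomputable def vcos {k : ℕ} (x y : Fin k → ℝ) : ℝ :=
  (∑ i, x i * y i) / (euclNorm x * euclNorm y)

lemma zsummable {s : ℝ} (hs : 1 < s) :
    Summable (fun j : ℕ => ((j : ℝ) + 1) ^ (-s)) := by
  have h : Summable (fun j : ℕ => ((j : ℝ)) ^ (-s)) := by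
    rw [Real.summable_nat_rpow]; linarith
  have h2 := h.comp_injective Nat.succ_injective
  have he : ((fun j : ℕ => ((j : ℝ)) ^ (-s)) ∘ Nat.succ)
      = fun j : ℕ => ((j : ℝ) + 1) ^ (-s) := by
    funext j; simp [Function.comp, Nat.succ_eq_add_one]
  rwa [he] at h2

lemma zsum_ge {s : ℝ} (hs : 1 < s) (F : Finset ℕ) :
    ∑ j ∈ F, ((j : ℝ) + 1) ^ (-s) ≤ zetaR s :=
  Summable.sum_le_tsum F (fun i _ => Real.rpow_nonneg (by positivity) _) (zsummable hs)


/-- Let `Y ∈ {0,1}^{n×m}` be a binary matrix whose column-sum vector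
`r = Yᵀe` satisfies the power law `r_g = r_max · g^(−α)` with `r_max > 0` and `α > 1`.
Let `(σ1, p1, q1)` be a principal singular triple of `Y` (σ1 the largest singular value,
i.e., the operator 2-norm, `p1, q1` unit vectors with `Y q1 = σ1 p1`, `Yᵀ p1 = σ1 q1`)
where `p1` and `q1` are entrywise nonnegative.  Then
`cos(r, q1) ≥ (σ1² / (r_max √ζ(2α))) · √(1 − r_max(ζ(α) − 1)/σ1²)`. -/
theorem popularity_memorization_bound
    (n m : ℕ) (Y : Matrix (Fin n) (Fin m) ℝ)
    (hbin : ∀ u i, Y u i = 0 ∨ Y u i = 1)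
    (α rmax : ℝ) (hα : 1 < α) (hrmax : 0 < rmax)
    (r : Fin m → ℝ) (hrdef : r = Yᵀ.mulVec (fun _ => 1))
    (hpow : ∀ g : Fin m, r g = rmax * (((g : ℕ) : ℝ) + 1) ^ (-α))
    (σ1 : ℝ) (p1 : Fin n → ℝ) (q1 : Fin m → ℝ)
    (hσnn : 0 ≤ σ1)
    (hop : ∀ q : Fin m → ℝ, euclNorm q = 1 → euclNorm (Y.mulVec q) ≤ σ1)
    (hp1 : euclNorm p1 = 1) (hq1 : euclNorm q1 = 1)
    (hYq : Y.mulVec q1 = σ1 • p1) (hYp : Yᵀ.mulVec p1 = σ1 • q1)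
    (hpnn : ∀ u, 0 ≤ p1 u) (hqnn : ∀ i, 0 ≤ q1 i) :
    vcos r q1 ≥ σ1 ^ 2 / (rmax * Real.sqrt (zetaR (2 * α)))
      * Real.sqrt (1 - rmax * (zetaR α - 1) / σ1 ^ 2) := by
  -- m > 0
  have hm : 0 < m := by
    rcases Nat.eq_zero_or_pos m with h | h
    · subst h; simp [euclNorm] at hq1
    · exact h
  have : Nonempty (Fin m) := ⟨⟨0, hm⟩⟩
  -- nonnegativity of r and of the cosine
  have hrnn : ∀ g, 0 ≤ r g := fun g => by
    rw [hpow g]; positivity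
  have cnn : 0 ≤ vcos r q1 := by
    apply div_nonneg
    · exact Finset.sum_nonneg fun i _ => mul_nonneg (hrnn i) (hqnn i)
    · exact mul_nonneg (Real.sqrt_nonneg _) (Real.sqrt_nonneg _)
  -- trivial cases
  rcases eq_or_lt_of_le hσnn with h0 | hσ
  · rw [← h0]; simpa using cnn
  by_cases hneg : 1 - rmax * (zetaR α - 1) / σ1 ^ 2 ≤ 0
  · rw [Real.sqrt_eq_zero_of_nonpos hneg, mul_zero]; exact cnn
  push_neg at hneg
  -- basic identities
  have hq2 : ∑ i, q1 i ^ 2 = 1 := by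
    simp only [euclNorm] at hq1; exact Real.sqrt_eq_one.mp hq1
  have hp2 : ∑ u, p1 u ^ 2 = 1 := by
    simp only [euclNorm] at hp1; exact Real.sqrt_eq_one.mp hp1
  set S : ℝ := ∑ u, p1 u with hSdef
  have hS : 0 ≤ S := Finset.sum_nonneg fun u _ => hpnn u
  have hri : ∀ i, r i = ∑ u, Y u i := by
    intro i; rw [hrdef]; simp [Matrix.mulVec, dotProduct, transpose_apply]
  -- numerator identity
  have hnum : ∑ i, r i * q1 i = σ1 * S := by
    have h1 : ∀ u, ∑ i, Y u i * q1 i = σ1 * p1 u := by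
      intro u
      have := congrFun hYq u
      simpa [Matrix.mulVec, dotProduct] using this
    calc ∑ i, r i * q1 i = ∑ i, (∑ u, Y u i) * q1 i := by
          simp_rw [hri]
      _ = ∑ i, ∑ u, Y u i * q1 i := by simp_rw [Finset.sum_mul]
      _ = ∑ u, ∑ i, Y u i * q1 i := Finset.sum_comm
      _ = ∑ u, σ1 * p1 u := by simp_rw [h1]
      _ = σ1 * S := by rw [← Finset.mul_sum]
  -- the column vector c = Yᵀ p1
  set c : Fin m → ℝ := fun i => ∑ u, Y u i * p1 u with hcdef
  have hc : ∀ i, c i = σ1 * q1 i := by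
    intro i
    have := congrFun hYp i
    simpa [Matrix.mulVec, dotProduct, transpose_apply, hcdef] using this
  have hsig2 : ∑ i, c i ^ 2 = σ1 ^ 2 := by
    simp_rw [hc, mul_pow, ← Finset.mul_sum, hq2, mul_one]
  have hbin01 : ∀ u i, 0 ≤ Y u i ∧ Y u i ≤ 1 := by
    intro u i; rcases hbin u i with h | h <;> rw [h] <;> norm_num
  have hcnnn : ∀ i, 0 ≤ c i := fun i =>
    Finset.sum_nonneg fun u _ => mul_nonneg (hbin01 u i).1 (hpnn u)
  have hcS : ∀ i, c i ≤ S := by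
    intro i
    apply Finset.sum_le_sum
    intro u _
    calc Y u i * p1 u ≤ 1 * p1 u :=
          mul_le_mul_of_nonneg_right (hbin01 u i).2 (hpnn u)
      _ = p1 u := one_mul _
  -- Cauchy–Schwarz per column: c i ^ 2 ≤ r i
  have hYsq : ∀ i : Fin m, ∑ u, (Y u i) ^ 2 = r i := by
    intro i
    rw [hri]
    apply Finset.sum_congr rfl
    intro u _
    rcases hbin u i with h | h <;> rw [h] <;> norm_num
  have hcr : ∀ i, c i ^ 2 ≤ r i := by
    intro i
    have CS := Finset.sum_mul_sq_le_sq_mul_sq Finset.univ (fun u => Y u i) p1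
    rw [hYsq i, hp2, mul_one] at CS
    exact CS
  -- key bound : σ1^2 ≤ S^2 + rmax * (zetaR α - 1)
  have h0mem : (⟨0, hm⟩ : Fin m) ∈ Finset.univ := Finset.mem_univ _
  have hr0 : r ⟨0, hm⟩ = rmax := by
    rw [hpow]; norm_num
  have hsum_r : ∑ i, r i ≤ rmax * zetaR α := by
    have : ∀ i : Fin m, r i = rmax * (((i : ℕ) : ℝ) + 1) ^ (-α) := hpow
    calc ∑ i, r i = rmax * ∑ i : Fin m, (((i : ℕ) : ℝ) + 1) ^ (-α) := by
          rw [Finset.mul_sum]; exact Finset.sum_congr rfl fun i _ => hpow i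
      _ ≤ rmax * zetaR α := by
          apply mul_le_mul_of_nonneg_left _ hrmax.le
          rw [Fin.sum_univ_eq_sum_range (fun j => ((j : ℝ) + 1) ^ (-α))]
          exact zsum_ge hα _
  have key : σ1 ^ 2 ≤ S ^ 2 + rmax * (zetaR α - 1) := by
    have hsplit : σ1 ^ 2 = c ⟨0, hm⟩ ^ 2 + ∑ i ∈ Finset.univ.erase ⟨0, hm⟩, c i ^ 2 := by
      rw [← hsig2]; exact (Finset.add_sum_erase _ _ h0mem).symm
    have h1 : c ⟨0, hm⟩ ^ 2 ≤ S ^ 2 := pow_le_pow_left₀ (hcnnn _) (hcS _) 2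
    have h2 : ∑ i ∈ Finset.univ.erase ⟨0, hm⟩, c i ^ 2
        ≤ ∑ i ∈ Finset.univ.erase ⟨0, hm⟩, r i :=
      Finset.sum_le_sum fun i _ => hcr i
    have h3 : ∑ i ∈ Finset.univ.erase ⟨0, hm⟩, r i = (∑ i, r i) - rmax := by
      rw [Finset.sum_erase_eq_sub h0mem, hr0]
    have h4 : (∑ i, r i) - rmax ≤ rmax * (zetaR α - 1) := by
      rw [mul_sub, mul_one]; linarith [hsum_r]
    linarith [hsplit, h1, h2, h3.le, h3.ge, h4]
  -- norm of r
  have hr2sum : ∑ i, r i ^ 2 ≤ rmax ^ 2 * zetaR (2 * α) := by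
    have heach : ∀ i : Fin m, r i ^ 2 = rmax ^ 2 * (((i : ℕ) : ℝ) + 1) ^ (-(2 * α)) := by
      intro i
      rw [hpow, mul_pow]
      congr 1
      rw [sq, ← Real.rpow_add (by positivity)]
      ring_nf
    calc ∑ i, r i ^ 2 = rmax ^ 2 * ∑ i : Fin m, (((i : ℕ) : ℝ) + 1) ^ (-(2 * α)) := by
          rw [Finset.mul_sum]; exact Finset.sum_congr rfl fun i _ => heach i
      _ ≤ rmax ^ 2 * zetaR (2 * α) := by
          apply mul_le_mul_of_nonneg_left _ (by positivity)
          rw [Fin.sum_univ_eq_sum_range (fun j => ((j : ℝ) + 1) ^ (-(2 * α)))]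
          exact zsum_ge (by linarith) _
  have hrsum_pos : 0 < ∑ i, r i ^ 2 := by
    apply Finset.sum_pos' (fun i _ => sq_nonneg _)
    exact ⟨⟨0, hm⟩, Finset.mem_univ _, by rw [hr0]; positivity⟩
  have hD : 0 < euclNorm r := Real.sqrt_pos.mpr hrsum_pos
  have hDR : euclNorm r ≤ rmax * Real.sqrt (zetaR (2 * α)) := by
    have : rmax * Real.sqrt (zetaR (2 * α)) = Real.sqrt (rmax ^ 2 * zetaR (2 * α)) := by
      rw [Real.sqrt_mul (by positivity), Real.sqrt_sq hrmax.le]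
    rw [this, euclNorm]
    exact Real.sqrt_le_sqrt hr2sum
  have hRpos : 0 < rmax * Real.sqrt (zetaR (2 * α)) := lt_of_lt_of_le hD hDR
  -- final computation
  set A : ℝ := σ1 ^ 2 - rmax * (zetaR α - 1) with hAdef
  have hApos : 0 < A := by
    have := hneg
    rw [sub_pos, div_lt_one (by positivity)] at this
    linarith
  have hsqrtA : Real.sqrt (1 - rmax * (zetaR α - 1) / σ1 ^ 2) = Real.sqrt A / σ1 := by
    have h1 : 1 - rmax * (zetaR α - 1) / σ1 ^ 2 = A / σ1 ^ 2 := by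
      field_simp
      rw [hAdef]
    rw [h1, Real.sqrt_div hApos.le, Real.sqrt_sq hσ.le]
  have hSA : Real.sqrt A ≤ S := by
    rw [show S = Real.sqrt (S ^ 2) from (Real.sqrt_sq hS).symm]
    exact Real.sqrt_le_sqrt (by linarith)
  have hvcos : vcos r q1 = σ1 * S / euclNorm r := by
    rw [vcos, hnum, hq1, mul_one]
  rw [hvcos, hsqrtA, ge_iff_le]
  have hstep : σ1 ^ 2 / (rmax * Real.sqrt (zetaR (2 * α))) * (Real.sqrt A / σ1)
      = σ1 * Real.sqrt A / (rmax * Real.sqrt (zetaR (2 * α))) := by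
    field_simp
  rw [hstep]
  calc σ1 * Real.sqrt A / (rmax * Real.sqrt (zetaR (2 * α)))
      ≤ σ1 * S / (rmax * Real.sqrt (zetaR (2 * α))) := by
        gcongr
    _ ≤ σ1 * S / euclNorm r := by
        gcongr
end

section
/- Let Y ∈ {0,1}^{n×m} be a binary matrix whose column-sum vector r = Yᵀe satisfies the power law r_g = r_max · g^(−α) for g = 1,…,m with r_max > 0 and α > 1, and let (σ1, p1, q1) be a principal singular triple of Y with σ1 > 0. Then the entries of q1 satisfy Σ_{i=2}^m q_{1i}² ≤ r_max(ζ(α) − 1)/σ1². -/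
open Matrix Finset

/-- Euclidean (L2) norm of a vector. -/
noncomputable def enormL2 {k : ℕ} (v : Fin k → ℝ) : ℝ := Real.sqrt (∑ i, v i ^ 2)

lemma summable_shift (α : ℝ) (hα : 1 < α) :
    Summable (fun j : ℕ => ((j : ℝ) + 1) ^ (-α)) := by
  have h : Summable (fun n : ℕ => (n : ℝ) ^ (-α)) :=
    Real.summable_nat_rpow.2 (by linarith)
  have := (summable_nat_add_iff 1).2 h
  refine this.congr fun j => ?_
  push_cast
  ring_nf

/-- Let `Y ∈ {0,1}^{n×m}` be a binary matrix whose column-sum vector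
`r = Yᵀe` satisfies the power law `r_g = r_max · g^(−α)` with `r_max > 0` and `α > 1`,
and let `(σ1, p1, q1)` be a principal singular triple of `Y` with `σ1 > 0`.  Then the
entries of `q1` other than the first (the most popular item, `g = 1`) satisfy
`Σ_{i=2}^m q_{1i}² ≤ r_max(ζ(α) − 1)/σ1²`. -/
theorem tail_entries_q1_bound
    (n m : ℕ) (Y : Matrix (Fin n) (Fin m) ℝ)
    (hbin : ∀ u i, Y u i = 0 ∨ Y u i = 1)
    (α rmax : ℝ) (hα : 1 < α) (hrmax : 0 < rmax)
    (r : Fin m → ℝ) (hrdef : r = Yᵀ.mulVec (fun _ => 1))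
    (hpow : ∀ g : Fin m, r g = rmax * (((g : ℕ) : ℝ) + 1) ^ (-α))
    (σ1 : ℝ) (p1 : Fin n → ℝ) (q1 : Fin m → ℝ)
    (hσpos : 0 < σ1)
    (hop : ∀ q : Fin m → ℝ, enormL2 q = 1 → enormL2 (Y.mulVec q) ≤ σ1)
    (hp1 : enormL2 p1 = 1) (hq1 : enormL2 q1 = 1)
    (hYq : Y.mulVec q1 = σ1 • p1) (hYp : Yᵀ.mulVec p1 = σ1 • q1) :
    ∑ i ∈ Finset.univ.filter (fun i : Fin m => (i : ℕ) ≠ 0), q1 i ^ 2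
      ≤ rmax * (zetaR α - 1) / σ1 ^ 2 := by
  -- ∑ p1² = 1
  have hp1sq : ∑ u, p1 u ^ 2 = 1 := by
    have h := hp1
    unfold enormL2 at h
    have hnn : 0 ≤ ∑ u, p1 u ^ 2 := Finset.sum_nonneg fun u _ => sq_nonneg _
    nlinarith [Real.sq_sqrt hnn, Real.sqrt_nonneg (∑ u, p1 u ^ 2)]
  -- pointwise bound: σ1² q1 i² ≤ r i
  have key : ∀ i : Fin m, σ1 ^ 2 * q1 i ^ 2 ≤ r i := by
    intro i
    have hentry : σ1 * q1 i = ∑ u, Y u i * p1 u := by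
      have := congrFun hYp i
      simp only [Matrix.mulVec, Matrix.transpose_apply, dotProduct,
        Pi.smul_apply, smul_eq_mul] at this
      linarith [this]
    have hcs := Finset.sum_mul_sq_le_sq_mul_sq Finset.univ (fun u => Y u i) p1
    have hsq : ∀ u, Y u i ^ 2 = Y u i := by
      intro u; rcases hbin u i with h | h <;> simp [h]
    have hcol : ∑ u, Y u i ^ 2 = r i := by
      rw [hrdef]
      simp only [Matrix.mulVec, Matrix.transpose_apply, dotProduct, mul_one]
      exact Finset.sum_congr rfl fun u _ => hsq u
    calc σ1 ^ 2 * q1 i ^ 2 = (σ1 * q1 i) ^ 2 := by ring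
      _ = (∑ u, Y u i * p1 u) ^ 2 := by rw [hentry]
      _ ≤ (∑ u, Y u i ^ 2) * ∑ u, p1 u ^ 2 := hcs
      _ = r i := by rw [hcol, hp1sq, mul_one]
  -- tail sum of power law bounded by rmax (ζ(α) - 1)
  have hsum : Summable (fun j : ℕ => ((j : ℝ) + 1) ^ (-α)) := summable_shift α hα
  have hzeta : zetaR α - 1 = ∑' j : ℕ, (((j : ℝ) + 1) + 1) ^ (-α) := by
    have h0 := Summable.tsum_eq_zero_add (f := fun j : ℕ => ((j : ℝ) + 1) ^ (-α)) hsum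
    have heq : ∀ j : ℕ, ((((j + 1 : ℕ)) : ℝ) + 1) ^ (-α) = (((j : ℝ) + 1) + 1) ^ (-α) := by
      intro j; push_cast; ring_nf
    rw [zetaR, h0, tsum_congr heq]
    norm_num [Real.one_rpow]
  set s : Finset (Fin m) := Finset.univ.filter (fun i : Fin m => (i : ℕ) ≠ 0) with hs
  have htail : ∑ i ∈ s, ((( i : ℕ) : ℝ) + 1) ^ (-α) ≤ zetaR α - 1 := by
    rw [hzeta]
    have himg : ∑ i ∈ s, (((i : ℕ) : ℝ) + 1) ^ (-α)
        = ∑ k ∈ s.image (fun i : Fin m => (i : ℕ) - 1), (((k : ℝ) + 1) + 1) ^ (-α) := by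
      rw [Finset.sum_image]
      · refine Finset.sum_congr rfl fun i hi => ?_
        have hi0 : (i : ℕ) ≠ 0 := (Finset.mem_filter.mp hi).2
        have : ((i : ℕ) - 1 : ℕ) + 1 = (i : ℕ) := Nat.succ_pred_eq_of_pos (Nat.pos_of_ne_zero hi0)
        rw [show ((((i : ℕ) - 1 : ℕ) : ℝ) + 1) + 1 = (((i : ℕ) : ℝ) + 1) by
          rw [← this]; push_cast; ring]
      · intro a ha b hb hab
        have ha0 : (a : ℕ) ≠ 0 := (Finset.mem_filter.mp ha).2
        have hb0 : (b : ℕ) ≠ 0 := (Finset.mem_filter.mp hb).2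
        have : (a : ℕ) = (b : ℕ) := by simp only at hab; omega
        exact Fin.ext this
    rw [himg]
    have hsum' : Summable (fun j : ℕ => (((j : ℝ) + 1) + 1) ^ (-α)) := by
      have := (summable_nat_add_iff 1).2 hsum
      refine this.congr fun j => ?_
      push_cast; ring_nf
    exact Summable.sum_le_tsum _ (fun j _ => Real.rpow_nonneg (by positivity) _) hsum'
  -- assemble
  rw [le_div_iff₀ (by positivity)]
  calc (∑ i ∈ s, q1 i ^ 2) * σ1 ^ 2 = ∑ i ∈ s, σ1 ^ 2 * q1 i ^ 2 := by
        rw [Finset.sum_mul]; exact Finset.sum_congr rfl fun i _ => by ring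
    _ ≤ ∑ i ∈ s, r i := Finset.sum_le_sum fun i _ => key i
    _ = rmax * ∑ i ∈ s, (((i : ℕ) : ℝ) + 1) ^ (-α) := by
        rw [Finset.mul_sum]; exact Finset.sum_congr rfl fun i _ => hpow i
    _ ≤ rmax * (zetaR α - 1) := by
        exact mul_le_mul_of_nonneg_left htail hrmax.le
end

section
/- Let Y ∈ {0,1}^{n×m} be a binary matrix whose column-sum vector r = Yᵀe satisfies the power law r_g = r_max · g^(−α) for g = 1,…,m with r_max > 0 and α > 1, and let (σ1, p1, q1) be a principal singular triple of Y with σ1 > 0 and with p1 and q1 entrywise nonnegative. Then ⟨e, p1⟩ ≥ σ1 · √(1 − r_max(ζ(α) − 1)/σ1²). -/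
open Matrix

/-- Let `Y ∈ {0,1}^{n×m}` be a binary matrix whose column-sum vector
`r = Yᵀe` satisfies the power law `r_g = r_max · g^(−α)` with `r_max > 0` and `α > 1`,
and let `(σ1, p1, q1)` be a principal singular triple of `Y` with `σ1 > 0` and with
`p1, q1` entrywise nonnegative.  Then `⟨e, p1⟩ ≥ σ1 · √(1 − r_max(ζ(α) − 1)/σ1²)`. -/
theorem ones_inner_p1_lower_bound
    (n m : ℕ) (Y : Matrix (Fin n) (Fin m) ℝ)
    (hbin : ∀ u i, Y u i = 0 ∨ Y u i = 1)
    (α rmax : ℝ) (hα : 1 < α) (hrmax : 0 < rmax)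
    (r : Fin m → ℝ) (hrdef : r = Yᵀ.mulVec (fun _ => 1))
    (hpow : ∀ g : Fin m, r g = rmax * (((g : ℕ) : ℝ) + 1) ^ (-α))
    (σ1 : ℝ) (p1 : Fin n → ℝ) (q1 : Fin m → ℝ)
    (hσpos : 0 < σ1)
    (hop : ∀ q : Fin m → ℝ, enormL2 q = 1 → enormL2 (Y.mulVec q) ≤ σ1)
    (hp1 : enormL2 p1 = 1) (hq1 : enormL2 q1 = 1)
    (hYq : Y.mulVec q1 = σ1 • p1) (hYp : Yᵀ.mulVec p1 = σ1 • q1)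
    (hpnn : ∀ u, 0 ≤ p1 u) (hqnn : ∀ i, 0 ≤ q1 i) :
    σ1 * Real.sqrt (1 - rmax * (zetaR α - 1) / σ1 ^ 2) ≤ ∑ u, p1 u := by
  set S := ∑ u, p1 u with hS
  have hSnn : 0 ≤ S := Finset.sum_nonneg fun u _ => hpnn u
  have hq1sq : ∑ i, q1 i ^ 2 = 1 := by
    have h0 : 0 ≤ ∑ i, q1 i ^ 2 := Finset.sum_nonneg fun i _ => sq_nonneg _
    have h := hq1
    unfold enormL2 at h
    nlinarith [Real.sq_sqrt h0]
  have hp1sq : ∑ u, p1 u ^ 2 = 1 := by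
    have h0 : 0 ≤ ∑ u, p1 u ^ 2 := Finset.sum_nonneg fun u _ => sq_nonneg _
    have h := hp1
    unfold enormL2 at h
    nlinarith [Real.sq_sqrt h0]
  have hm : 0 < m := by
    rcases Nat.eq_zero_or_pos m with h | h
    · exfalso; subst h; simp at hq1sq
    · exact h
  have key : ∀ i, σ1 * q1 i = ∑ u, Y u i * p1 u := by
    intro i
    have h := congrFun hYp i
    simpa [Matrix.mulVec, Matrix.transpose_apply, dotProduct, Pi.smul_apply,
      smul_eq_mul] using h.symm
  have hri : ∀ i, r i = ∑ u, Y u i := by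
    intro i
    rw [hrdef]
    simp [Matrix.mulVec, dotProduct, Matrix.transpose_apply]
  -- Claim A : σ1 q1 i ≤ S
  have hA : ∀ i, σ1 * q1 i ≤ S := by
    intro i
    rw [key i, hS]
    apply Finset.sum_le_sum
    intro u _
    rcases hbin u i with h | h <;> simp [h, hpnn u]
  -- Claim B : (σ1 q1 i)^2 ≤ r i
  have hB : ∀ i, (σ1 * q1 i) ^ 2 ≤ r i := by
    intro i
    rw [key i, hri i]
    have hcs := Finset.sum_mul_sq_le_sq_mul_sq Finset.univ (fun u => Y u i) p1
    have hYsq : ∑ u, (Y u i) ^ 2 = ∑ u, Y u i := by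
      apply Finset.sum_congr rfl
      intro u _
      rcases hbin u i with h | h <;> simp [h]
    calc (∑ u, Y u i * p1 u) ^ 2 ≤ (∑ u, (Y u i) ^ 2) * (∑ u, p1 u ^ 2) := hcs
      _ = ∑ u, Y u i := by rw [hYsq, hp1sq, mul_one]
  have hsum : σ1 ^ 2 = ∑ i, (σ1 * q1 i) ^ 2 := by
    simp only [mul_pow, ← Finset.mul_sum, hq1sq, mul_one]
  set i0 : Fin m := ⟨0, hm⟩ with hi0
  have hsplit : ∑ i, (σ1 * q1 i) ^ 2
      = (σ1 * q1 i0) ^ 2 + ∑ i ∈ Finset.univ.erase i0, (σ1 * q1 i) ^ 2 :=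
    (Finset.add_sum_erase _ _ (Finset.mem_univ i0)).symm
  -- summability
  have hsummable : Summable (fun j : ℕ => ((j : ℝ) + 1) ^ (-α)) := by
    have h : Summable (fun j : ℕ => ((j : ℝ)) ^ (-α)) :=
      Real.summable_nat_rpow.mpr (by linarith)
    have h2 := (summable_nat_add_iff 1).mpr h
    simpa using h2
  have hzeta : zetaR α = ∑' j : ℕ, ((j : ℝ) + 1) ^ (-α) := rfl
  -- tail bound
  have htail : ∑ i ∈ Finset.univ.erase i0, (σ1 * q1 i) ^ 2 ≤ rmax * (zetaR α - 1) := by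
    have h1 : ∑ i ∈ Finset.univ.erase i0, (σ1 * q1 i) ^ 2
        ≤ ∑ i ∈ Finset.univ.erase i0, r i :=
      Finset.sum_le_sum fun i _ => hB i
    have hrtot : ∑ i, r i = ∑ j ∈ Finset.range m, rmax * ((j : ℝ) + 1) ^ (-α) := by
      rw [Finset.sum_congr rfl fun i _ => hpow i]
      exact Fin.sum_univ_eq_sum_range (fun j => rmax * ((j : ℝ) + 1) ^ (-α)) m
    have hri0 : r i0 = rmax := by
      rw [hpow i0]
      simp [hi0, Real.one_rpow]
    have h2 : ∑ i ∈ Finset.univ.erase i0, r i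
        = (∑ j ∈ Finset.range m, rmax * ((j : ℝ) + 1) ^ (-α)) - rmax := by
      have := Finset.add_sum_erase Finset.univ r (Finset.mem_univ i0)
      rw [← hrtot, ← this, hri0]
      ring
    have h3 : ∑ j ∈ Finset.range m, ((j : ℝ) + 1) ^ (-α) ≤ zetaR α := by
      rw [hzeta]
      exact Summable.sum_le_tsum (Finset.range m)
        (fun j _ => Real.rpow_nonneg (by positivity) _) hsummable
    have h4 : ∑ j ∈ Finset.range m, rmax * ((j : ℝ) + 1) ^ (-α) ≤ rmax * zetaR α := by
      rw [← Finset.mul_sum]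
      exact mul_le_mul_of_nonneg_left h3 hrmax.le
    calc ∑ i ∈ Finset.univ.erase i0, (σ1 * q1 i) ^ 2
        ≤ ∑ i ∈ Finset.univ.erase i0, r i := h1
      _ = (∑ j ∈ Finset.range m, rmax * ((j : ℝ) + 1) ^ (-α)) - rmax := h2
      _ ≤ rmax * zetaR α - rmax := by linarith
      _ = rmax * (zetaR α - 1) := by ring
  have hq0nn : 0 ≤ σ1 * q1 i0 := mul_nonneg hσpos.le (hqnn i0)
  have hfin : σ1 ^ 2 - rmax * (zetaR α - 1) ≤ S ^ 2 := by
    nlinarith [hA i0, hsum, hsplit, htail]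
  have heq : σ1 * Real.sqrt (1 - rmax * (zetaR α - 1) / σ1 ^ 2)
      = Real.sqrt (σ1 ^ 2 - rmax * (zetaR α - 1)) := by
    rw [show σ1 ^ 2 - rmax * (zetaR α - 1)
        = σ1 ^ 2 * (1 - rmax * (zetaR α - 1) / σ1 ^ 2) by field_simp,
      Real.sqrt_mul (sq_nonneg σ1), Real.sqrt_sq hσpos.le]
  calc σ1 * Real.sqrt (1 - rmax * (zetaR α - 1) / σ1 ^ 2)
      = Real.sqrt (σ1 ^ 2 - rmax * (zetaR α - 1)) := heq
    _ ≤ Real.sqrt (S ^ 2) := Real.sqrt_le_sqrt hfin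
    _ = S := Real.sqrt_sq hSnn
end

section
/- Let m ≥ 2, α > 1/2, and let Ŷ ∈ ℝ^{n×m} admit the decomposition Ŷ = Σ_{k=1}^L σ_k p_k q_kᵀ where σ_1 > 0, σ_k ≥ 0, ‖p_k‖ = 1 and ‖q_k‖ = 1 for all k, and where q_1 = r/‖r‖ with r satisfying the power law r_g = r_max · g^(−α), r_max > 0. Then the number of rows u for which Ŷ_{u1} > Ŷ_{ui} for all i ∈ {2,…,m} (i.e., the most popular item is the top-1 recommendation for user u) is at least φ(a), where a = (√(2ζ(2α))/(1 − 2^(−α))) · ((Σ_{k=1}^L σ_k)/σ_1 − 1) and φ(a) = #{u ∈ {1,…,n} : p_{1u} > a}. Consequently the ratio η of such rows satisfies η ≥ (1/n)·φ(a). -/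
open Finset

/-- Euclidean (L2) norm of a vector. -/
noncomputable def euclNormL2 {k : ℕ} (v : Fin k → ℝ) : ℝ := Real.sqrt (∑ i, v i ^ 2)

lemma sum_sq_of_enorm_one {k : ℕ} {v : Fin k → ℝ} (h : euclNormL2 v = 1) :
    ∑ i, v i ^ 2 = 1 := by
  have h0 : 0 ≤ ∑ i, v i ^ 2 := Finset.sum_nonneg fun i _ => sq_nonneg _
  have h1 : Real.sqrt (∑ i, v i ^ 2) = 1 := h
  nlinarith [Real.sq_sqrt h0]

lemma abs_entry_le {k : ℕ} {v : Fin k → ℝ} (h : euclNormL2 v = 1) (i : Fin k) :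
    |v i| ≤ 1 := by
  have hs := sum_sq_of_enorm_one h
  have h1 : v i ^ 2 ≤ 1 := by
    rw [← hs]
    exact Finset.single_le_sum (fun j _ => sq_nonneg (v j)) (Finset.mem_univ i)
  have h2 := Real.sqrt_le_sqrt h1
  rwa [Real.sqrt_sq_eq_abs, Real.sqrt_one] at h2

lemma abs_diff_le_sqrt_two {k : ℕ} {v : Fin k → ℝ} (h : euclNormL2 v = 1) (i j : Fin k) :
    |v i - v j| ≤ Real.sqrt 2 := by
  have h2 : (v i - v j) ^ 2 ≤ 2 := by
    rcases eq_or_ne i j with rfl | hij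
    · norm_num
    · have hs := sum_sq_of_enorm_one h
      have hpair : v i ^ 2 + v j ^ 2 ≤ 1 := by
        rw [← hs]
        have hpr := Finset.sum_pair (f := fun x => v x ^ 2) hij
        calc v i ^ 2 + v j ^ 2 = ∑ x ∈ ({i, j} : Finset (Fin k)), v x ^ 2 := hpr.symm
          _ ≤ ∑ x, v x ^ 2 := Finset.sum_le_sum_of_subset_of_nonneg
              (Finset.subset_univ _) (fun x _ _ => sq_nonneg _)
      nlinarith [sq_nonneg (v i + v j)]
  calc |v i - v j| = Real.sqrt ((v i - v j) ^ 2) := (Real.sqrt_sq_eq_abs _).symm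
    _ ≤ Real.sqrt 2 := Real.sqrt_le_sqrt h2

set_option maxHeartbeats 1000000 in
/-- **popularity bias amplification.** Let `m ≥ 2`, `α > 1/2`, and let
`Ŷ ∈ ℝ^{n×m}` admit the decomposition `Ŷ = Σ_{k=1}^L σ_k p_k q_kᵀ` with `σ_1 > 0`,
`σ_k ≥ 0`, `p_k, q_k` unit vectors, and `q_1 = r/‖r‖` where `r` is a power-law vector
`r_g = r_max g^(−α)`, `r_max > 0`.  Then the number of users `u` for which the most
popular item (index `1`, here `Fin`-index `0`) is the top-1 recommendation is at least
`φ(a)`, where `a = (√(2ζ(2α))/(1 − 2^(−α)))·((Σ_k σ_k)/σ_1 − 1)` and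
`φ(a) = #{u : p_{1u} > a}`; consequently the ratio `η` of such users satisfies
`η ≥ φ(a)/n`. -/
theorem popularity_bias_amplification
    (n m L : ℕ) (hm : 2 ≤ m) (hL : 0 < L)
    (α rmax : ℝ) (hα : 1 / 2 < α) (hrmax : 0 < rmax)
    (r : Fin m → ℝ) (hpow : ∀ g : Fin m, r g = rmax * (((g : ℕ) : ℝ) + 1) ^ (-α))
    (σ : Fin L → ℝ) (p : Fin L → Fin n → ℝ) (q : Fin L → Fin m → ℝ)
    (hσ1 : 0 < σ ⟨0, hL⟩) (hσnn : ∀ k, 0 ≤ σ k)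
    (hp : ∀ k, euclNormL2 (p k) = 1) (hq : ∀ k, euclNormL2 (q k) = 1)
    (hq1 : q ⟨0, hL⟩ = fun i => r i / euclNormL2 r)
    (Yhat : Matrix (Fin n) (Fin m) ℝ)
    (hYhat : ∀ u i, Yhat u i = ∑ k, σ k * p k u * q k i)
    (a : ℝ)
    (ha : a = Real.sqrt (2 * zetaR (2 * α)) / (1 - (2 : ℝ) ^ (-α))
        * ((∑ k, σ k) / σ ⟨0, hL⟩ - 1))
    (φa : ℕ) (hφ : φa = (Finset.univ.filter (fun u : Fin n => a < p ⟨0, hL⟩ u)).card)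
    (S : Finset (Fin n))
    (hS : S = @Finset.filter (Fin n) (fun u : Fin n =>
        ∀ i : Fin m, (i : ℕ) ≠ 0 → Yhat u i < Yhat u ⟨0, by omega⟩) (fun _ => inferInstance) Finset.univ)
    (η : ℝ) (hη : η = (S.card : ℝ) / n) :
    φa ≤ S.card ∧ (φa : ℝ) / n ≤ η := by
  have hα0 : (0:ℝ) < α := by linarith
  set z : Fin L := ⟨0, hL⟩ with hzdef
  set t : ℝ := zetaR (2 * α) with ht
  have htnn : 0 ≤ t := by
    rw [ht, zetaR]
    exact tsum_nonneg fun j => Real.rpow_nonneg (by positivity) _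
  have hsummable : Summable (fun j : ℕ => ((j : ℝ) + 1) ^ (-(2*α))) := by
    have h1 : Summable (fun n : ℕ => (n : ℝ) ^ (-(2*α))) :=
      Real.summable_nat_rpow.2 (by linarith)
    have h2 := (summable_nat_add_iff 1).2 h1
    refine h2.congr fun n => ?_
    push_cast
    rfl
  have hsum_le : ∑ j ∈ Finset.range m, ((j : ℝ) + 1) ^ (-(2*α)) ≤ t := by
    rw [ht, zetaR]
    exact Summable.sum_le_tsum _ (fun j _ => Real.rpow_nonneg (by positivity) _) hsummable
  -- bound on the norm of r
  have hsumr : ∑ i, r i ^ 2 ≤ rmax ^ 2 * t := by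
    have hterm : ∀ i : Fin m, r i ^ 2 = rmax ^ 2 * (((i:ℕ):ℝ) + 1) ^ (-(2*α)) := by
      intro i
      have hx : (0:ℝ) ≤ ((i:ℕ):ℝ) + 1 := by positivity
      rw [hpow i, mul_pow]
      congr 1
      rw [← Real.rpow_natCast ((((i:ℕ):ℝ)+1) ^ (-α)) 2, ← Real.rpow_mul hx]
      congr 1
      push_cast
      ring
    calc ∑ i, r i ^ 2 = rmax ^ 2 * ∑ i : Fin m, (((i:ℕ):ℝ) + 1) ^ (-(2*α)) := by
          rw [Finset.mul_sum]; exact Finset.sum_congr rfl fun i _ => hterm i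
      _ ≤ rmax ^ 2 * t := by
          apply mul_le_mul_of_nonneg_left _ (sq_nonneg rmax)
          rw [Fin.sum_univ_eq_sum_range (fun j => ((j:ℝ)+1) ^ (-(2*α))) m]
          exact hsum_le
  have hRle : euclNormL2 r ≤ rmax * Real.sqrt t := by
    unfold euclNormL2
    calc Real.sqrt (∑ i, r i ^ 2) ≤ Real.sqrt (rmax ^ 2 * t) := Real.sqrt_le_sqrt hsumr
      _ = rmax * Real.sqrt t := by
          rw [Real.sqrt_mul (sq_nonneg rmax), Real.sqrt_sq hrmax.le]
  have hm0 : 0 < m := by omega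
  set i0 : Fin m := ⟨0, hm0⟩ with hi0def
  have hri0 : r i0 = rmax := by
    rw [hpow i0]
    norm_num
  have hRpos : 0 < euclNormL2 r := by
    unfold euclNormL2
    apply Real.sqrt_pos.2
    have hpos : 0 < r i0 ^ 2 := by rw [hri0]; positivity
    exact Finset.sum_pos' (fun i _ => sq_nonneg _) ⟨i0, Finset.mem_univ _, hpos⟩
  have h2α : (2:ℝ) ^ (-α) < 1 :=
    Real.rpow_lt_one_of_one_lt_of_neg one_lt_two (by linarith)
  have hden : 0 < 1 - (2:ℝ) ^ (-α) := by linarith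
  set T : ℝ := ∑ k ∈ Finset.univ.erase z, σ k with hT
  have hTnn : 0 ≤ T := Finset.sum_nonneg fun k _ => hσnn k
  have hsig : ∑ k, σ k = σ z + T := by
    rw [hT, ← Finset.add_sum_erase _ σ (Finset.mem_univ z)]
  have hσa : σ z * a = Real.sqrt (2 * t) * T / (1 - (2:ℝ) ^ (-α)) := by
    rw [ha, hsig]
    field_simp
    ring
  have ha_nn : 0 ≤ a := by
    have hTσ : (σ z + T) / σ z - 1 = T / σ z := by field_simp; ring
    rw [ha, hsig, hTσ]
    exact mul_nonneg (div_nonneg (Real.sqrt_nonneg _) hden.le)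
      (div_nonneg hTnn hσ1.le)
  -- the core claim
  have hmain : φa ≤ S.card := by
    rw [hφ, hS]
    apply Finset.card_le_card
    intro u hu
    simp only [Finset.mem_filter, Finset.mem_univ, true_and] at hu ⊢
    intro i hi
    rw [hYhat, hYhat]
    show ∑ k, σ k * p k u * q k i < ∑ k, σ k * p k u * q k i0
    have hrest : -(Real.sqrt 2 * T) ≤
        ∑ k ∈ Finset.univ.erase z, σ k * p k u * (q k i0 - q k i) := by
      have hterm : ∀ k ∈ Finset.univ.erase z,
          σ k * -Real.sqrt 2 ≤ σ k * (p k u * (q k i0 - q k i)) := by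
        intro k _
        apply mul_le_mul_of_nonneg_left _ (hσnn k)
        have hx : |p k u * (q k i0 - q k i)| ≤ Real.sqrt 2 := by
          rw [abs_mul]
          calc |p k u| * |q k i0 - q k i| ≤ 1 * Real.sqrt 2 :=
                mul_le_mul (abs_entry_le (hp k) u) (abs_diff_le_sqrt_two (hq k) i0 i)
                  (abs_nonneg _) zero_le_one
            _ = Real.sqrt 2 := one_mul _
        linarith [neg_abs_le (p k u * (q k i0 - q k i))]
      calc -(Real.sqrt 2 * T) = T * -Real.sqrt 2 := by ring
        _ = ∑ k ∈ Finset.univ.erase z, σ k * -Real.sqrt 2 := by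
            rw [hT, Finset.sum_mul]
        _ ≤ ∑ k ∈ Finset.univ.erase z, σ k * (p k u * (q k i0 - q k i)) :=
            Finset.sum_le_sum hterm
        _ = ∑ k ∈ Finset.univ.erase z, σ k * p k u * (q k i0 - q k i) :=
            Finset.sum_congr rfl fun k _ => by ring
    have hhead : Real.sqrt 2 * T < σ z * p z u * (q z i0 - q z i) := by
      have hq1' : q z = fun i => r i / euclNormL2 r := hq1
      rw [hq1']
      simp only
      have hdiff : rmax * (1 - (2:ℝ)^(-α)) / euclNormL2 r ≤ r i0 / euclNormL2 r - r i / euclNormL2 r := by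
        rw [div_sub_div_same]
        apply (div_le_div_iff_of_pos_right hRpos).mpr
        rw [hri0, hpow i]
        have h1le : 1 ≤ (i:ℕ) := Nat.one_le_iff_ne_zero.2 hi
        have h2le : (2:ℝ) ≤ ((i:ℕ):ℝ) + 1 := by
          have : (1:ℝ) ≤ ((i:ℕ):ℝ) := by exact_mod_cast h1le
          linarith
        have hmono : (((i:ℕ):ℝ) + 1) ^ (-α) ≤ (2:ℝ) ^ (-α) :=
          Real.rpow_le_rpow_of_nonpos two_pos h2le (by linarith)
        nlinarith [mul_le_mul_of_nonneg_left hmono hrmax.le]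
      have hcpos : 0 < rmax * (1 - (2:ℝ)^(-α)) / euclNormL2 r := by positivity
      have hstep2 : Real.sqrt 2 * T ≤ σ z * a * (rmax * (1 - (2:ℝ)^(-α)) / euclNormL2 r) := by
        rw [hσa]
        have heq : Real.sqrt (2*t) * T / (1 - (2:ℝ)^(-α)) *
            (rmax * (1 - (2:ℝ)^(-α)) / euclNormL2 r)
            = Real.sqrt (2*t) * T * rmax / euclNormL2 r := by
          field_simp
        rw [heq, le_div_iff₀ hRpos]
        have h1 : Real.sqrt 2 * euclNormL2 r ≤ Real.sqrt (2*t) * rmax := by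
          rw [Real.sqrt_mul (by norm_num : (0:ℝ) ≤ 2)]
          calc Real.sqrt 2 * euclNormL2 r ≤ Real.sqrt 2 * (rmax * Real.sqrt t) :=
                mul_le_mul_of_nonneg_left hRle (Real.sqrt_nonneg 2)
            _ = Real.sqrt 2 * Real.sqrt t * rmax := by ring
        nlinarith [mul_le_mul_of_nonneg_right h1 hTnn]
      calc Real.sqrt 2 * T ≤ σ z * a * (rmax * (1 - (2:ℝ)^(-α)) / euclNormL2 r) := hstep2
        _ < σ z * p z u * (rmax * (1 - (2:ℝ)^(-α)) / euclNormL2 r) :=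
            mul_lt_mul_of_pos_right (mul_lt_mul_of_pos_left hu hσ1) hcpos
        _ ≤ σ z * p z u * (r i0 / euclNormL2 r - r i / euclNormL2 r) := by
            have hpzu : 0 < p z u := lt_of_le_of_lt ha_nn hu
            exact mul_le_mul_of_nonneg_left hdiff (mul_nonneg hσ1.le hpzu.le)
    have key : 0 < ∑ k, σ k * p k u * (q k i0 - q k i) := by
      rw [← Finset.sum_erase_add _ _ (Finset.mem_univ z)]
      linarith
    have expand : ∀ k ∈ (Finset.univ : Finset (Fin L)),
        σ k * p k u * q k i0 - σ k * p k u * q k i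
          = σ k * p k u * (q k i0 - q k i) := fun k _ => by ring
    have hsub : (∑ k, σ k * p k u * q k i0) - ∑ k, σ k * p k u * q k i
        = ∑ k, σ k * p k u * (q k i0 - q k i) := by
      rw [← Finset.sum_sub_distrib]
      exact Finset.sum_congr rfl expand
    linarith
  refine ⟨hmain, ?_⟩
  rcases Nat.eq_zero_or_pos n with hn | hn
  · subst hn
    have hφ0 : φa = 0 := by rw [hφ]; simp
    rw [hη, hφ0]
    simp
  · rw [hη]
    have hcast : (φa : ℝ) ≤ (S.card : ℝ) := Nat.cast_le.2 hmain
    have hnpos : (0:ℝ) < n := by exact_mod_cast hn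
    exact div_le_div_of_nonneg_right hcast hnpos.le
end

section
/- Let m ≥ 2, α > 1/2, and let q1 = r/‖r‖ where r ∈ ℝ^m satisfies the power law r_g = r_max · g^(−α) with r_max > 0. Then for every i ∈ {2,…,m}, the entries of q1 satisfy q_{11} − q_{1i} ≥ (1 − 2^(−α))/√ζ(2α). -/
/-- Euclidean (L2) norm of a vector. -/
noncomputable def enorm {k : ℕ} (v : Fin k → ℝ) : ℝ := Real.sqrt (∑ i, v i ^ 2)

/-- Let `m ≥ 2`, `α > 1/2`, and let `q1 = r/‖r‖` where `r ∈ ℝ^m`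
satisfies the power law `r_g = r_max · g^(−α)` with `r_max > 0`.  Then for every
`i ∈ {2,…,m}` (Fin-index `≠ 0`), `q_{11} − q_{1i} ≥ (1 − 2^(−α))/√ζ(2α)`. -/
theorem normalized_powerlaw_gap
    (m : ℕ) (hm : 2 ≤ m)
    (α rmax : ℝ) (hα : 1 / 2 < α) (hrmax : 0 < rmax)
    (r : Fin m → ℝ) (hpow : ∀ g : Fin m, r g = rmax * (((g : ℕ) : ℝ) + 1) ^ (-α))
    (q1 : Fin m → ℝ) (hq1 : q1 = fun i => r i / _root_.enorm r) :
    ∀ i : Fin m, (i : ℕ) ≠ 0 →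
      (1 - (2 : ℝ) ^ (-α)) / Real.sqrt (zetaR (2 * α)) ≤ q1 ⟨0, by omega⟩ - q1 i := by
  intro i hi
  have hα0 : (0:ℝ) < α := by linarith
  have h2α : (1:ℝ) < 2 * α := by linarith
  -- summability of the zeta series
  have hsum : Summable (fun j : ℕ => ((j : ℝ) + 1) ^ (-(2*α))) := by
    have h0 : Summable (fun j : ℕ => ((j : ℝ)) ^ (-(2*α))) :=
      Real.summable_nat_rpow.mpr (by linarith)
    have h1 := (summable_nat_add_iff 1).mpr h0
    simpa using h1
  -- the finite sum S
  set S : ℝ := ∑ g : Fin m, (((g : ℕ) : ℝ) + 1) ^ (-(2*α)) with hSdef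
  have hSpos : 0 < S := by
    apply Finset.sum_pos
    · intro g _
      positivity
    · exact ⟨⟨0, by omega⟩, Finset.mem_univ _⟩
  have hSle : S ≤ zetaR (2*α) := by
    rw [hSdef, Fin.sum_univ_eq_sum_range (fun j : ℕ => ((j : ℝ) + 1) ^ (-(2*α))) m]
    exact Summable.sum_le_tsum (Finset.range m)
      (fun j _ => Real.rpow_nonneg (by positivity) _) hsum
  -- enorm r = rmax * sqrt S
  have hterm : ∀ g : Fin m, r g ^ 2 = rmax ^ 2 * (((g : ℕ) : ℝ) + 1) ^ (-(2*α)) := by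
    intro g
    have hb : (0:ℝ) ≤ ((g : ℕ) : ℝ) + 1 := by positivity
    rw [hpow g, mul_pow]
    congr 1
    rw [← Real.rpow_natCast ((((g : ℕ) : ℝ) + 1) ^ (-α)) 2, ← Real.rpow_mul hb]
    norm_num
    ring_nf
  have henorm : _root_.enorm r = rmax * Real.sqrt S := by
    unfold _root_.enorm
    rw [Finset.sum_congr rfl (fun g _ => hterm g), ← Finset.mul_sum, Real.sqrt_mul (by positivity),
      Real.sqrt_sq hrmax.le]
  have hsqrtSpos : 0 < Real.sqrt S := Real.sqrt_pos.mpr hSpos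
  -- compute the gap
  have h0 : r ⟨0, by omega⟩ = rmax := by
    rw [hpow]; norm_num
  have hgap : q1 ⟨0, by omega⟩ - q1 i
      = (1 - (((i : ℕ) : ℝ) + 1) ^ (-α)) / Real.sqrt S := by
    rw [hq1]
    simp only
    rw [div_sub_div_same, henorm, h0, hpow i]
    rw [show rmax - rmax * (((i : ℕ) : ℝ) + 1) ^ (-α)
        = rmax * (1 - (((i : ℕ) : ℝ) + 1) ^ (-α)) by ring]
    rw [mul_div_mul_left _ _ (ne_of_gt hrmax)]
  rw [hgap]
  -- numerator bound : (i+1)^(-α) ≤ 2^(-α)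
  have hi2 : (2:ℝ) ≤ ((i : ℕ) : ℝ) + 1 := by
    have h1 : (1:ℝ) ≤ ((i : ℕ) : ℝ) := by
      exact_mod_cast Nat.one_le_iff_ne_zero.mpr hi
    linarith
  have hnum : (((i : ℕ) : ℝ) + 1) ^ (-α) ≤ (2:ℝ) ^ (-α) := by
    rw [Real.rpow_neg (by norm_num : (0:ℝ) ≤ 2), Real.rpow_neg (by linarith : (0:ℝ) ≤ ((i : ℕ) : ℝ) + 1)]
    apply inv_anti₀ (by positivity)
    exact Real.rpow_le_rpow (by norm_num) hi2 hα0.le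
  have hnum0 : (0:ℝ) ≤ 1 - (2:ℝ) ^ (-α) := by
    have : (2:ℝ) ^ (-α) ≤ (2:ℝ) ^ (0:ℝ) :=
      Real.rpow_le_rpow_of_exponent_le (by norm_num) (by linarith)
    simp at this
    linarith
  have hden : Real.sqrt S ≤ Real.sqrt (zetaR (2*α)) := Real.sqrt_le_sqrt hSle
  apply div_le_div₀ (by linarith) (by linarith) hsqrtSpos hden
end
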